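/- The dimension of the maximal chain polytope 𝓜([m] × [n]) of the product of two chains [m] and [n] equals (m−1)(n−1). In particular, for m = n = 3, 𝓜([3] × [3]) ⊂ ℝ^9 has dimension 4. -/

import Mathlib

noncomputable def indVec {P : Type*} (C : Set P) : P → ℝ := C.indicator 1

noncomputable def maxChainPolytope (P : Type*) [PartialOrder P] : Set (P → ℝ) :=
  convexHull ℝ (indVec '' {C : Set P | IsMaxChain (· ≤ ·) C})


open Finset

/-- Between two comparable points there is a point at any intermediate level. -/
lemma exists_between_lvl {m n : ℕ} {a b : Fin m × Fin n} (hab : a ≤ b) {k : ℕ}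
    (h1 : a.1.1 + a.2.1 ≤ k) (h2 : k ≤ b.1.1 + b.2.1) :
    ∃ z : Fin m × Fin n, a ≤ z ∧ z ≤ b ∧ z.1.1 + z.2.1 = k := by
  obtain ⟨⟨a1, ha1⟩, ⟨a2, ha2⟩⟩ := a
  obtain ⟨⟨b1, hb1⟩, ⟨b2, hb2⟩⟩ := b
  have H1 : a1 + a2 ≤ k := h1
  have H2 : k ≤ b1 + b2 := h2
  have hab1 : a1 ≤ b1 := hab.1
  have hab2 : a2 ≤ b2 := hab.2
  refine ⟨(⟨a1 + min (k - (a1+a2)) (b1 - a1), by omega⟩,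
          ⟨k - (a1 + min (k - (a1+a2)) (b1 - a1)), by omega⟩), ⟨?_, ?_⟩, ⟨?_, ?_⟩, ?_⟩
  · exact (by omega : a1 ≤ a1 + min (k - (a1+a2)) (b1 - a1))
  · exact (by omega : a2 ≤ k - (a1 + min (k - (a1+a2)) (b1 - a1)))
  · exact (by omega : a1 + min (k - (a1+a2)) (b1 - a1) ≤ b1)
  · exact (by omega : k - (a1 + min (k - (a1+a2)) (b1 - a1)) ≤ b2)
  · exact (by omega : a1 + min (k - (a1+a2)) (b1 - a1) + (k - (a1 + min (k - (a1+a2)) (b1 - a1))) = k)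

/-- A chain hitting every level is maximal. -/
lemma maxChain_of_lvl_surj {m n : ℕ} (hm : 1 ≤ m) (hn : 1 ≤ n)
    {C : Set (Fin m × Fin n)} (hc : IsChain (· ≤ ·) C)
    (hl : ∀ k, k < m + n - 1 → ∃ p ∈ C, p.1.1 + p.2.1 = k) :
    IsMaxChain (· ≤ ·) C := by
  refine ⟨hc, fun t ht hsub => hsub.antisymm fun x hx => ?_⟩
  have hx1 := x.1.2; have hx2 := x.2.2
  obtain ⟨p, hpC, hpl⟩ := hl (x.1.1 + x.2.1) (by omega)
  by_cases hxp : x = p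
  · exact hxp ▸ hpC
  · rcases ht hx (hsub hpC) hxp with h | h <;>
    · obtain ⟨u, v⟩ := Prod.le_def.mp h
      have := Fin.le_def.mp u; have := Fin.le_def.mp v
      have : x = p := Prod.ext (Fin.ext (by omega)) (Fin.ext (by omega))
      exact this ▸ hpC

lemma bot_mem_maxChain {m n : ℕ} (hm : 1 ≤ m) (hn : 1 ≤ n)
    {C : Set (Fin m × Fin n)} (hC : IsMaxChain (· ≤ ·) C) :
    ((⟨0, hm⟩ : Fin m), (⟨0, hn⟩ : Fin n)) ∈ C := by
  set x0 : Fin m × Fin n := ((⟨0, hm⟩ : Fin m), (⟨0, hn⟩ : Fin n))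
  have hch : IsChain (· ≤ ·) (insert x0 C) :=
    hC.1.insert fun b hb _ => Or.inl (Prod.le_def.mpr ⟨Fin.le_def.mpr (by simp [x0]), Fin.le_def.mpr (by simp [x0])⟩)
  have := hC.2 hch (Set.subset_insert _ _)
  exact this ▸ Set.mem_insert _ _

lemma top_mem_maxChain {m n : ℕ} (hm : 1 ≤ m) (hn : 1 ≤ n)
    {C : Set (Fin m × Fin n)} (hC : IsMaxChain (· ≤ ·) C) :
    ((⟨m-1, by omega⟩ : Fin m), (⟨n-1, by omega⟩ : Fin n)) ∈ C := by
  set x1 : Fin m × Fin n := ((⟨m-1, by omega⟩ : Fin m), (⟨n-1, by omega⟩ : Fin n))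
  have hch : IsChain (· ≤ ·) (insert x1 C) :=
    hC.1.insert fun b hb _ => by
      have := b.1.2; have := b.2.2
      exact Or.inr (Prod.le_def.mpr ⟨Fin.le_def.mpr (by simp [x1]; omega), Fin.le_def.mpr (by simp [x1]; omega)⟩)
  have := hC.2 hch (Set.subset_insert _ _)
  exact this ▸ Set.mem_insert _ _

/-- Every maximal chain hits every level. -/
lemma maxChain_exists_lvl {m n : ℕ} (hm : 1 ≤ m) (hn : 1 ≤ n)
    {C : Set (Fin m × Fin n)} (hC : IsMaxChain (· ≤ ·) C)
    {k : ℕ} (hk : k < m + n - 1) : ∃ p ∈ C, p.1.1 + p.2.1 = k := by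
  by_contra h
  push_neg at h
  set A : Set (Fin m × Fin n) := {p ∈ C | p.1.1 + p.2.1 < k} with hA
  set B : Set (Fin m × Fin n) := {p ∈ C | k < p.1.1 + p.2.1} with hB
  have hbot := bot_mem_maxChain hm hn hC
  have htop := top_mem_maxChain hm hn hC
  have hAne : A.Nonempty := ⟨_, hbot, by
    have := h _ hbot; simp at this ⊢; omega⟩
  have hBne : B.Nonempty := ⟨_, htop, by
    have := h _ htop; simp at this ⊢; omega⟩
  obtain ⟨a, haA, hamax⟩ : ∃ a ∈ A, ∀ a' ∈ A, id a ≤ id a' → id a = id a' := by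
    obtain ⟨a, ha, hm⟩ := (Set.toFinite A).exists_maximalFor id A hAne
    exact ⟨a, ha, fun a' ha' h => le_antisymm h (hm ha' h)⟩
  obtain ⟨b, hbB, hbmin⟩ : ∃ a ∈ B, ∀ a' ∈ B, id a' ≤ id a → id a = id a' := by
    obtain ⟨a, ha, hm⟩ := (Set.toFinite B).exists_minimalFor id B hBne
    exact ⟨a, ha, fun a' ha' h => le_antisymm (hm ha' h) h⟩
  -- all of A is ≤ a, all of B is ≥ b
  have hAle : ∀ p ∈ A, p ≤ a := by
    intro p hp
    by_cases hpa : p = a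
    · exact hpa ▸ le_refl _
    · rcases hC.1 hp.1 haA.1 hpa with h' | h'
      · exact h'
      · exact (hamax p hp h').symm.le
  have hBge : ∀ p ∈ B, b ≤ p := by
    intro p hp
    by_cases hpb : p = b
    · exact hpb ▸ le_refl _
    · rcases hC.1 hbB.1 hp.1 (fun e => hpb e.symm) with h' | h'
      · exact h'
      · exact (hbmin p hp h').le
  have hab : a ≤ b := by
    have hne : a ≠ b := by
      intro e
      have h1 : a.1.1 + a.2.1 < k := haA.2
      have h2 : k < b.1.1 + b.2.1 := hbB.2
      rw [e] at h1; omega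
    rcases hC.1 haA.1 hbB.1 hne with h' | h'
    · exact h'
    · exfalso
      obtain ⟨u, v⟩ := Prod.le_def.mp h'
      have := Fin.le_def.mp u; have := Fin.le_def.mp v
      have h1 : a.1.1 + a.2.1 < k := haA.2
      have h2 : k < b.1.1 + b.2.1 := hbB.2
      omega
  obtain ⟨z, hz1, hz2, hz3⟩ := exists_between_lvl hab (k := k) (le_of_lt haA.2) (le_of_lt hbB.2)
  have hznC : z ∉ C := fun hzC => h z hzC hz3
  have hch : IsChain (· ≤ ·) (insert z C) := by
    refine hC.1.insert fun p hp hne => ?_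
    have htri : p ∈ A ∨ p ∈ B := by
      by_cases h' : p.1.1 + p.2.1 < k
      · exact Or.inl ⟨hp, h'⟩
      · refine Or.inr ⟨hp, ?_⟩
        have := h p hp
        omega
    rcases htri with h' | h'
    · exact Or.inr ((hAle p h').trans hz1)
    · exact Or.inl (hz2.trans (hBge p h'))
  have := hC.2 hch (Set.subset_insert _ _)
  exact hznC (this ▸ Set.mem_insert _ _)

/-- Any two same-level points of a chain are equal. -/
lemma maxChain_unique_lvl {m n : ℕ}
    {C : Set (Fin m × Fin n)} (hC : IsChain (· ≤ ·) C)
    {p q : Fin m × Fin n} (hp : p ∈ C) (hq : q ∈ C)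
    (hl : p.1.1 + p.2.1 = q.1.1 + q.2.1) : p = q := by
  by_cases hpq : p = q
  · exact hpq
  · rcases hC hp hq hpq with h | h <;>
    · obtain ⟨u, v⟩ := Prod.le_def.mp h
      have := Fin.le_def.mp u; have := Fin.le_def.mp v
      exact Prod.ext (Fin.ext (by omega)) (Fin.ext (by omega))

/-- A maximal chain through the corner `(u,v)` of the unit square with lower-left `(i,j)`. -/
def cornerChain (m n i j u v : ℕ) : Set (Fin m × Fin n) :=
  {p | (p.2.1 = 0 ∧ p.1.1 ≤ i) ∨ (p.1.1 = i ∧ p.2.1 ≤ j) ∨ (p.1.1 = i+1 ∧ j+1 ≤ p.2.1) ∨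
    (p.2.1 = n-1 ∧ i+1 ≤ p.1.1) ∨ (p.1.1 = u ∧ p.2.1 = v)}

lemma cornerChain_isChain {m n i j u v : ℕ} (hj : j + 1 ≤ n - 1)
    (huv : (u = i ∧ v = j+1) ∨ (u = i+1 ∧ v = j)) :
    IsChain (· ≤ ·) (cornerChain m n i j u v) := by
  intro p hp q hq hne
  have hp' : (p.2.1 = 0 ∧ p.1.1 ≤ i) ∨ (p.1.1 = i ∧ p.2.1 ≤ j) ∨ (p.1.1 = i+1 ∧ j+1 ≤ p.2.1) ∨
    (p.2.1 = n-1 ∧ i+1 ≤ p.1.1) ∨ (p.1.1 = u ∧ p.2.1 = v) := hp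
  have hq' : (q.2.1 = 0 ∧ q.1.1 ≤ i) ∨ (q.1.1 = i ∧ q.2.1 ≤ j) ∨ (q.1.1 = i+1 ∧ j+1 ≤ q.2.1) ∨
    (q.2.1 = n-1 ∧ i+1 ≤ q.1.1) ∨ (q.1.1 = u ∧ q.2.1 = v) := hq
  have hq2 := q.2.2
  have hp2 := p.2.2
  exact (by omega :
    (p.1.1 ≤ q.1.1 ∧ p.2.1 ≤ q.2.1) ∨ (q.1.1 ≤ p.1.1 ∧ q.2.1 ≤ p.2.1))

lemma cornerChain_lvl_surj {m n i j u v : ℕ} (hi : i + 1 ≤ m - 1) (hj : j + 1 ≤ n - 1)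
    (huv : (u = i ∧ v = j+1) ∨ (u = i+1 ∧ v = j)) {k : ℕ} (hk : k < m + n - 1) :
    ∃ p ∈ cornerChain m n i j u v, p.1.1 + p.2.1 = k := by
  have hn : 2 ≤ n := by omega
  have hm : 2 ≤ m := by omega
  rcases Nat.lt_or_ge i k with h1 | h1
  · rcases Nat.lt_or_ge (i+j) k with h2 | h2
    · rcases Nat.lt_or_ge (i+j+1) k with h3 | h3
      · rcases Nat.lt_or_ge (i+n) k with h4 | h4
        · -- top row
          exact ⟨((⟨k - (n-1), by omega⟩ : Fin m), (⟨n-1, by omega⟩ : Fin n)),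
            Or.inr (Or.inr (Or.inr (Or.inl ⟨rfl, (by omega : i+1 ≤ k - (n-1))⟩))),
            (by omega : k - (n-1) + (n-1) = k)⟩
        · -- column i+1
          exact ⟨((⟨i+1, by omega⟩ : Fin m), (⟨k - i - 1, by omega⟩ : Fin n)),
            Or.inr (Or.inr (Or.inl ⟨rfl, (by omega : j+1 ≤ k - i - 1)⟩)),
            (by omega : i + 1 + (k - i - 1) = k)⟩
      · -- corner
        exact ⟨((⟨u, by omega⟩ : Fin m), (⟨v, by omega⟩ : Fin n)),
          Or.inr (Or.inr (Or.inr (Or.inr ⟨rfl, rfl⟩))),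
          (by omega : u + v = k)⟩
    · -- column i
      exact ⟨((⟨i, by omega⟩ : Fin m), (⟨k - i, by omega⟩ : Fin n)),
        Or.inr (Or.inl ⟨rfl, (by omega : k - i ≤ j)⟩),
        (by omega : i + (k - i) = k)⟩
  · -- bottom row
    exact ⟨((⟨k, by omega⟩ : Fin m), (⟨0, by omega⟩ : Fin n)),
      Or.inl ⟨rfl, (by omega : k ≤ i)⟩,
      (by omega : k + 0 = k)⟩

set_option maxHeartbeats 2000000 in
lemma indVec_cornerChain_sub {m n i j : ℕ} (hi : i + 1 ≤ m - 1) (hj : j + 1 ≤ n - 1) :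
    indVec (cornerChain m n i j i (j+1)) - indVec (cornerChain m n i j (i+1) j)
      = Pi.single ((⟨i, by omega⟩ : Fin m), (⟨j+1, by omega⟩ : Fin n)) 1
        - Pi.single ((⟨i+1, by omega⟩ : Fin m), (⟨j, by omega⟩ : Fin n)) 1 := by
  funext p
  have hp1 := p.1.2; have hp2 := p.2.2
  have e1 : (p = ((⟨i, by omega⟩ : Fin m), (⟨j+1, by omega⟩ : Fin n)))
      ↔ (p.1.1 = i ∧ p.2.1 = j+1) := by
    simp [Prod.ext_iff, Fin.ext_iff]
  have e2 : (p = ((⟨i+1, by omega⟩ : Fin m), (⟨j, by omega⟩ : Fin n)))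
      ↔ (p.1.1 = i+1 ∧ p.2.1 = j) := by
    simp [Prod.ext_iff, Fin.ext_iff]
  simp only [Pi.sub_apply, indVec, Set.indicator_apply, Pi.single_apply, Pi.one_apply,
    cornerChain, Set.mem_setOf_eq, e1, e2]
  clear e1 e2
  split_ifs
  all_goals try norm_num
  all_goals try (exfalso; omega)

open Finset Module

/-- The level-sum linear map. -/
noncomputable def lvlMap (m n : ℕ) : ((Fin m × Fin n) → ℝ) →ₗ[ℝ] (Fin (m+n-1) → ℝ) where
  toFun v := fun k => ∑ p ∈ univ.filter (fun p : Fin m × Fin n => p.1.1 + p.2.1 = k.1), v p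
  map_add' u v := by funext k; simp [Finset.sum_add_distrib]
  map_smul' c v := by funext k; simp [Finset.mul_sum]

lemma lvlMap_indVec {m n : ℕ} (hm : 1 ≤ m) (hn : 1 ≤ n)
    {C : Set (Fin m × Fin n)} (hC : IsMaxChain (· ≤ ·) C) :
    lvlMap m n (indVec C) = fun _ => 1 := by
  funext k
  obtain ⟨p0, hp0, hl0⟩ := maxChain_exists_lvl hm hn hC k.2
  show (∑ p ∈ univ.filter (fun p : Fin m × Fin n => p.1.1 + p.2.1 = k.1), indVec C p) = 1
  have hcong : ∀ p ∈ univ.filter (fun p : Fin m × Fin n => p.1.1 + p.2.1 = k.1),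
      indVec C p = if p = p0 then (1:ℝ) else 0 := by
    intro p hp
    simp only [Finset.mem_filter, Finset.mem_univ, true_and] at hp
    by_cases hpc : p ∈ C
    · have hpp0 : p = p0 := maxChain_unique_lvl hC.1 hpc hp0 (by omega)
      rw [hpp0]
      simp [indVec, Set.indicator_of_mem hp0]
    · have hpp0 : p ≠ p0 := fun e => hpc (e ▸ hp0)
      simp [indVec, Set.indicator_of_notMem, hpc, hpp0]
  rw [Finset.sum_congr rfl hcong, Finset.sum_ite_eq' _ p0 (fun _ => (1:ℝ))]
  simp [Finset.mem_filter, hl0]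

lemma lvlMap_surj {m n : ℕ} (hm : 1 ≤ m) (hn : 1 ≤ n) :
    Function.Surjective (lvlMap m n) := by
  intro f
  set rep : Fin (m+n-1) → Fin m × Fin n := fun k =>
    ((⟨min k.1 (m-1), by have := k.2; omega⟩ : Fin m),
     (⟨k.1 - min k.1 (m-1), by have := k.2; omega⟩ : Fin n)) with hrep
  have hlvl : ∀ k : Fin (m+n-1), (rep k).1.1 + (rep k).2.1 = k.1 := by
    intro k
    exact (by omega : min k.1 (m-1) + (k.1 - min k.1 (m-1)) = k.1)
  refine ⟨fun p => ∑ k : Fin (m+n-1), if p = rep k then f k else 0, ?_⟩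
  funext k'
  show (∑ p ∈ univ.filter (fun p : Fin m × Fin n => p.1.1 + p.2.1 = k'.1),
      ∑ k : Fin (m+n-1), if p = rep k then f k else 0) = f k'
  rw [Finset.sum_comm]
  have hcong : ∀ k : Fin (m+n-1), k ∈ (univ : Finset (Fin (m+n-1))) →
      (∑ p ∈ univ.filter (fun p : Fin m × Fin n => p.1.1 + p.2.1 = k'.1),
        if p = rep k then f k else 0) = if k = k' then f k else 0 := by
    intro k _
    rw [Finset.sum_ite_eq' _ (rep k) (fun _ => f k)]
    have hmem : rep k ∈ univ.filter (fun p : Fin m × Fin n => p.1.1 + p.2.1 = k'.1)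
        ↔ k = k' := by
      simp only [Finset.mem_filter, Finset.mem_univ, true_and, hlvl k, Fin.ext_iff]
    by_cases h : k = k'
    · simp [hmem.mpr h, h, hlvl]
    · have hnm : rep k ∉ univ.filter (fun p : Fin m × Fin n => p.1.1 + p.2.1 = k'.1) :=
        fun hh => h (hmem.mp hh)
      simp [hnm, h]
  rw [Finset.sum_congr rfl hcong, Finset.sum_ite_eq' _ k' f]
  simp

/-- Triangular evaluation map used to prove linear independence. -/
noncomputable def sqMap (m n m' n' : ℕ) :
    ((Fin m × Fin n) → ℝ) →ₗ[ℝ] ((Fin m' × Fin n') → ℝ) where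
  toFun v := fun x => ∑ p ∈ univ.filter
      (fun p : Fin m × Fin n => p.1.1 ≤ x.1.1 ∧ p.1.1 + p.2.1 = x.1.1 + x.2.1 + 1), v p
  map_add' u v := by funext x; simp [Finset.sum_add_distrib]
  map_smul' c v := by funext x; simp [Finset.mul_sum]

theorem stmt_18 (m n : ℕ) (hm : 1 ≤ m) (hn : 1 ≤ n) :
    Module.finrank ℝ (vectorSpan ℝ (maxChainPolytope (Fin m × Fin n))) =
      (m - 1) * (n - 1) := by
  obtain ⟨m', rfl⟩ : ∃ m', m = m' + 1 := ⟨m - 1, by omega⟩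
  obtain ⟨n', rfl⟩ : ∃ n', n = n' + 1 := ⟨n - 1, by omega⟩
  set m := m' + 1
  set n := n' + 1
  set s : Set ((Fin m × Fin n) → ℝ) := indVec '' {C | IsMaxChain (· ≤ ·) C} with hs
  set V : Submodule ℝ ((Fin m × Fin n) → ℝ) := vectorSpan ℝ s with hV
  have hspan : vectorSpan ℝ (maxChainPolytope (Fin m × Fin n)) = V := by
    rw [maxChainPolytope, ← direction_affineSpan, affineSpan_convexHull, direction_affineSpan]
  rw [hspan]
  -- upper bound
  have hsub : V ≤ LinearMap.ker (lvlMap m n) := by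
    rw [hV, vectorSpan_def]
    refine Submodule.span_le.mpr ?_
    rintro x hx
    rw [Set.mem_vsub] at hx
    obtain ⟨u, hu, v, hv, rfl⟩ := hx
    obtain ⟨C, hC, rfl⟩ := hu
    obtain ⟨D, hD, rfl⟩ := hv
    rw [SetLike.mem_coe, LinearMap.mem_ker]
    show lvlMap m n (indVec C -ᵥ indVec D) = 0
    rw [vsub_eq_sub, map_sub, lvlMap_indVec hm hn hC, lvlMap_indVec hm hn hD, sub_self]
  have hker : finrank ℝ (LinearMap.ker (lvlMap m n)) = m' * n' := by
    have h1 := LinearMap.finrank_range_add_finrank_ker (lvlMap m n)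
    rw [LinearMap.range_eq_top.mpr (lvlMap_surj hm hn), finrank_top,
      Module.finrank_fintype_fun_eq_card, Module.finrank_fintype_fun_eq_card,
      Fintype.card_fin, Fintype.card_prod, Fintype.card_fin, Fintype.card_fin] at h1
    have h2 : m * n = m' * n' + m' + n' + 1 := by show (m'+1)*(n'+1) = _; ring
    have h3 : m = m' + 1 := rfl
    have h4 : n = n' + 1 := rfl
    omega
  have hupper : finrank ℝ V ≤ m' * n' := hker ▸ Submodule.finrank_mono hsub
  -- lower bound
  have hb := fun (x : Fin m' × Fin n') =>
    indVec_cornerChain_sub (m := m) (n := n) (i := x.1.1) (j := x.2.1)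
      (by have := x.1.2; omega) (by have := x.2.2; omega)
  set b : Fin m' × Fin n' → ((Fin m × Fin n) → ℝ) := fun x =>
    indVec (cornerChain m n x.1.1 x.2.1 x.1.1 (x.2.1+1))
      - indVec (cornerChain m n x.1.1 x.2.1 (x.1.1+1) x.2.1) with hbdef
  have hbmem : ∀ x, b x ∈ V := by
    intro x
    have hi : x.1.1 + 1 ≤ m - 1 := by have := x.1.2; omega
    have hj : x.2.1 + 1 ≤ n - 1 := by have := x.2.2; omega
    refine vsub_mem_vectorSpan ℝ ⟨_, ?_, rfl⟩ ⟨_, ?_, rfl⟩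
    · exact maxChain_of_lvl_surj hm hn
        (cornerChain_isChain hj (Or.inl ⟨rfl, rfl⟩))
        (fun k hk => cornerChain_lvl_surj hi hj (Or.inl ⟨rfl, rfl⟩) hk)
    · exact maxChain_of_lvl_surj hm hn
        (cornerChain_isChain hj (Or.inr ⟨rfl, rfl⟩))
        (fun k hk => cornerChain_lvl_surj hi hj (Or.inr ⟨rfl, rfl⟩) hk)
  have hbind : LinearIndependent ℝ b := by
    refine LinearIndependent.of_comp (sqMap m n m' n') ?_
    have hcomp : (⇑(sqMap m n m' n') ∘ b) = fun x : Fin m' × Fin n' => Pi.single x (1:ℝ) := by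
      funext x y
      have hx1 := x.1.2; have hx2 := x.2.2
      have hy1 := y.1.2; have hy2 := y.2.2
      simp only [Function.comp_apply, hbdef]
      rw [hb x]
      have e0 : (y = x) ↔ (y.1.1 = x.1.1 ∧ y.2.1 = x.2.1) := by
        simp [Prod.ext_iff, Fin.ext_iff]
      simp only [sqMap, LinearMap.coe_mk, AddHom.coe_mk, Pi.sub_apply, Pi.single_apply,
        Finset.sum_sub_distrib, Finset.sum_ite_eq', Finset.mem_filter, Finset.mem_univ,
        true_and, e0]
      split_ifs <;> first | (norm_num; done) | (norm_num; omega) | omega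
    rw [hcomp]
    have := (Pi.basisFun ℝ (Fin m' × Fin n')).linearIndependent
    convert this using 1
    funext i
    simp [Pi.basisFun_apply]
  have hlower : m' * n' ≤ finrank ℝ V := by
    have hb' : LinearIndependent ℝ (fun x => (⟨b x, hbmem x⟩ : V)) := by
      refine LinearIndependent.of_comp V.subtype ?_
      convert hbind using 1
      funext x; rfl
    have := hb'.fintype_card_le_finrank
    simpa [Fintype.card_prod] using this
  have : finrank ℝ V = m' * n' := le_antisymm hupper hlower
  simp [this, m, n]
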